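/- For the function f(C) = 511 − Σ_{u=3}^{U} b(u)·(2^{u−2} − 1), where b(u) is the u-th bit of the integer C (0-indexed from the least significant bit), f is nonincreasing in C for 0 ≤ C ≤ 2048, f(0) = 511, and f(2048) = 0. -/
import Mathlib


open Finset

/-- `f C = 511 − Σ_{u=3}^{11} b(u)·(2^{u−2} − 1)`, where `b(u)` is the `u`-th bit of `C`. -/
def f (C : ℕ) : ℕ :=
  511 - ∑ u ∈ Finset.Icc 3 11, (if C.testBit u then 2 ^ (u - 2) - 1 else 0)

def h (n : ℕ) : ℕ :=
  ∑ i ∈ Finset.range 9, (if n.testBit i then 2 ^ (i + 1) - 1 else 0)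

lemma g_eq (C : ℕ) :
    (∑ u ∈ Finset.Icc 3 11, (if C.testBit u then 2 ^ (u - 2) - 1 else 0)) = h (C / 8) := by
  have hdiv : C / 8 = C >>> 3 := by
    rw [Nat.shiftRight_eq_div_pow]
  rw [h, hdiv]
  rw [show Finset.Icc 3 11 = Finset.Ico 3 12 by rfl, Finset.sum_Ico_eq_sum_range]
  apply Finset.sum_congr rfl
  intro i hi
  rw [Nat.testBit_shiftRight, show 3 + i - 2 = i + 1 from by omega]

set_option maxRecDepth 10000 in
lemma h_step : ∀ n : Fin 256, h n.val ≤ h (n.val + 1) := by decide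

lemma h_mono : ∀ n' ≤ 256, ∀ n ≤ n', h n ≤ h n' := by
  intro n' hn'
  induction n' with
  | zero =>
    intro n hn
    have hz : n = 0 := by omega
    subst hz
    exact le_rfl
  | succ k ih =>
    intro n hn
    rcases Nat.lt_or_ge n (k + 1) with h1 | h1
    · exact le_trans (ih (by omega) n (by omega)) (h_step ⟨k, by omega⟩)
    · have : n = k + 1 := by omega
      rw [this]

theorem stmt_18 :
    (∀ C C' : ℕ, C ≤ C' → C' ≤ 2048 → f C' ≤ f C) ∧ f 0 = 511 ∧ f 2048 = 0 := by
  refine ⟨?_, by decide, by decide⟩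
  intro C C' h1 h2
  unfold f
  apply Nat.sub_le_sub_left
  rw [g_eq, g_eq]
  exact h_mono (C' / 8) (by omega) (C / 8) (by omega)
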